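/- The exponential generating function of the shifted r-Bell polynomials satisfies Σ_{n≥0} B_{n+m}(z;r) t^n/n! = B_m(z·e^t; r) · exp(z(e^t − 1) + rt) for all nonnegative integers m, r (as an identity of formal power series in t, or of real analytic functions). -/

import Mathlib

open Finset

/-- `𝒜` is a set partition of `Fin N`: blocks are nonempty and every element
lies in exactly one block. -/
def IsSetPartition {N : ℕ} (𝒜 : Finset (Finset (Fin N))) : Prop :=
  (∀ t ∈ 𝒜, t.Nonempty) ∧ ∀ x : Fin N, ∃! t, t ∈ 𝒜 ∧ x ∈ t

/-- The elements of `S` lie in pairwise distinct blocks of `𝒜`. -/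
def DistinctBlocks {N : ℕ} (𝒜 : Finset (Finset (Fin N))) (S : Set (Fin N)) : Prop :=
  ∀ a ∈ S, ∀ b ∈ S, a ≠ b → ∀ t ∈ 𝒜, ¬(a ∈ t ∧ b ∈ t)

/-- The `r`-Stirling number of the second kind `{n+r brace k+r}_r`: the number of
partitions of `{1,…,n+r}` into `k+r` nonempty blocks with `1,…,r` in distinct blocks. -/
noncomputable def rStirling (r n k : ℕ) : ℕ :=
  Nat.card {𝒜 : Finset (Finset (Fin (n + r))) //
    IsSetPartition 𝒜 ∧ 𝒜.card = k + r ∧ DistinctBlocks 𝒜 {x | (x : ℕ) < r}}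

/-- The `(r₁,r₂)`-Stirling number of the second kind `{n+r₁+r₂ brace k+r₂}_{r₁,r₂}`. -/
noncomputable def rrStirling (r₁ r₂ n k : ℕ) : ℕ :=
  Nat.card {𝒜 : Finset (Finset (Fin (n + r₁ + r₂))) //
    IsSetPartition 𝒜 ∧ 𝒜.card = k + r₂ ∧
    DistinctBlocks 𝒜 {x | (x : ℕ) < r₁} ∧
    DistinctBlocks 𝒜 {x | r₁ ≤ (x : ℕ) ∧ (x : ℕ) < r₁ + r₂}}

/-- The `r`-Bell polynomial `B_n(z;r) = Σ_{k=0}^n {n+r brace k+r}_r z^k`. -/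
noncomputable def rBell (r n : ℕ) (z : ℝ) : ℝ :=
  ∑ k ∈ range (n + 1), (rStirling r n k : ℝ) * z ^ k

/-- The `(r₁,r₂)`-Bell polynomial `B_n(z;r₁,r₂) = Σ_{k=0}^{n+r₁} {n+r₁+r₂ brace k+r₂}_{r₁,r₂} z^k`. -/
noncomputable def rrBell (r₁ r₂ n : ℕ) (z : ℝ) : ℝ :=
  ∑ k ∈ range (n + r₁ + 1), (rrStirling r₁ r₂ n k : ℝ) * z ^ k

namespace RB

variable {r n x : ℕ}

def Valid (r n : ℕ) (𝒜 : Finset (Finset (Fin (n + r)))) : Prop :=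
  IsSetPartition 𝒜 ∧ DistinctBlocks 𝒜 {x | (x : ℕ) < r}

/-- the special element with index `j < r` -/
def sp (r n : ℕ) (j : ℕ) (h : j < r) : Fin (n + r) := ⟨j, by omega⟩

section blocks
variable {𝒜 : Finset (Finset (Fin (n + r)))}

noncomputable def blk (h : IsSetPartition 𝒜) (i : Fin (n + r)) : Finset (Fin (n + r)) :=
  (h.2 i).exists.choose

lemma blk_mem (h : IsSetPartition 𝒜) (i : Fin (n + r)) : blk h i ∈ 𝒜 :=
  (h.2 i).exists.choose_spec.1

lemma mem_blk (h : IsSetPartition 𝒜) (i : Fin (n + r)) : i ∈ blk h i :=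
  (h.2 i).exists.choose_spec.2

lemma blk_eq_of (h : IsSetPartition 𝒜) {t : Finset (Fin (n + r))} {i : Fin (n + r)}
    (ht : t ∈ 𝒜) (hi : i ∈ t) : t = blk h i :=
  (h.2 i).unique ⟨ht, hi⟩ ⟨blk_mem h i, mem_blk h i⟩

/-- ordinary blocks: those containing no special element -/
def OrdB (r n : ℕ) (𝒜 : Finset (Finset (Fin (n + r)))) : Finset (Finset (Fin (n + r))) :=
  𝒜.filter (fun t => ∀ i ∈ t, r ≤ (i : ℕ))

lemma card_valid (h : Valid r n 𝒜) : 𝒜.card = (OrdB r n 𝒜).card + r := by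
  classical
  have hsplit := Finset.card_filter_add_card_filter_not
    (s := 𝒜) (p := fun t => ∀ i ∈ t, r ≤ Fin.val i)
  have hr : (Finset.range r).card = (𝒜.filter (fun a => ¬ ∀ i ∈ a, r ≤ Fin.val i)).card := by
    apply Finset.card_bij (fun j hj => blk h.1 (sp r n j (Finset.mem_range.mp hj)))
    · intro j hj
      rw [Finset.mem_filter]
      refine ⟨blk_mem _ _, ?_⟩
      push_neg
      exact ⟨sp r n j (Finset.mem_range.mp hj), mem_blk _ _, by simpa [sp] using Finset.mem_range.mp hj⟩
    · intro j₁ hj₁ j₂ hj₂ heq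
      by_contra hne
      have h1 := Finset.mem_range.mp hj₁
      have h2 := Finset.mem_range.mp hj₂
      refine h.2 (sp r n j₁ h1) (by simpa [sp]) (sp r n j₂ h2) (by simpa [sp])
        (by simp [sp, Fin.ext_iff, hne]) (blk h.1 (sp r n j₂ h2)) (blk_mem _ _)
        ⟨?_, mem_blk _ _⟩
      rw [← heq]; exact mem_blk _ _
    · intro t ht
      rcases Finset.mem_filter.mp ht with ⟨ht𝒜, hne⟩
      push_neg at hne
      obtain ⟨i, hit, hir⟩ := hne
      refine ⟨(i : ℕ), Finset.mem_range.mpr hir, ?_⟩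
      have : sp r n (i : ℕ) hir = i := by simp [sp]
      rw [this]
      exact (blk_eq_of h.1 ht𝒜 hit).symm
  have hOrd : OrdB r n 𝒜 = 𝒜.filter (fun t => ∀ i ∈ t, r ≤ Fin.val i) := rfl
  rw [hOrd]
  rw [Finset.card_range] at hr
  omega

lemma ordb_card_le (h : Valid r n 𝒜) : (OrdB r n 𝒜).card ≤ n := by
  classical
  have hA : 𝒜.card ≤ n + r := by
    have hdisj : ∀ t₁ ∈ 𝒜, ∀ t₂ ∈ 𝒜, t₁ ≠ t₂ → Disjoint t₁ t₂ := by
      intro t₁ h₁ t₂ h₂ hne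
      rw [Finset.disjoint_left]
      intro a ha1 ha2
      exact hne ((blk_eq_of h.1 h₁ ha1).trans (blk_eq_of h.1 h₂ ha2).symm)
    calc 𝒜.card = ∑ _t ∈ 𝒜, 1 := by simp
    _ ≤ ∑ t ∈ 𝒜, t.card := Finset.sum_le_sum (fun t ht =>
        Finset.card_pos.mpr (h.1.1 t ht))
    _ = (𝒜.biUnion id).card := (Finset.card_biUnion hdisj).symm
    _ ≤ (Finset.univ : Finset (Fin (n + r))).card := Finset.card_le_card (Finset.subset_univ _)
    _ = n + r := by simp
  have := card_valid h
  omega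

end blocks

section fibers
variable {f : Fin (n + r) → Fin (x + r)}

/-- the fiber of `f` over `v` -/
def fib (f : Fin (n + r) → Fin (x + r)) (v : Fin (x + r)) : Finset (Fin (n + r)) :=
  Finset.univ.filter (fun i => f i = v)

lemma mem_fib {v : Fin (x + r)} {i : Fin (n + r)} : i ∈ fib f v ↔ f i = v := by
  simp [fib]

/-- the partition into fibers -/
def parts (f : Fin (n + r) → Fin (x + r)) : Finset (Finset (Fin (n + r))) :=
  Finset.univ.image (fun i => fib f (f i))

lemma mem_parts {t : Finset (Fin (n + r))} : t ∈ parts f ↔ ∃ i, t = fib f (f i) := by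
  simp [parts, eq_comm]

lemma parts_nonempty {t : Finset (Fin (n + r))} (ht : t ∈ parts f) : t.Nonempty := by
  rcases mem_parts.mp ht with ⟨i, rfl⟩
  exact ⟨i, mem_fib.mpr rfl⟩

lemma fib_eq {t : Finset (Fin (n + r))} (ht : t ∈ parts f) {i : Fin (n + r)} (hi : i ∈ t) :
    t = fib f (f i) := by
  rcases mem_parts.mp ht with ⟨j, rfl⟩
  rw [mem_fib.mp hi]

lemma parts_isPartition : IsSetPartition (parts f) := by
  constructor
  · exact fun t ht => parts_nonempty ht
  · intro i
    refine ⟨fib f (f i), ⟨mem_parts.mpr ⟨i, rfl⟩, mem_fib.mpr rfl⟩, ?_⟩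
    rintro t ⟨ht, hit⟩
    exact fib_eq ht hit

variable (hf : ∀ i : Fin (n + r), (i : ℕ) < r → ((f i : ℕ) = (i : ℕ)))

include hf in
lemma parts_valid : Valid r n (parts f) := by
  refine ⟨parts_isPartition, ?_⟩
  intro a ha b hb hab t ht ⟨hat, hbt⟩
  have h1 := (fib_eq ht hat).symm.trans (fib_eq ht hbt)
  have : f a = f b := by
    have : a ∈ fib f (f b) := h1 ▸ mem_fib.mpr rfl
    exact mem_fib.mp this
  apply hab
  have := congrArg Fin.val this
  rw [hf a ha, hf b hb] at this
  exact Fin.ext this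

include hf in
/-- in an ordinary fiber, values of `f` are at least `r` -/
lemma ord_val_ge {t : Finset (Fin (n + r))} (ht : t ∈ OrdB r n (parts f))
    {i : Fin (n + r)} (hi : i ∈ t) : r ≤ (f i : ℕ) := by
  rcases Finset.mem_filter.mp ht with ⟨htp, hord⟩
  by_contra hlt
  push_neg at hlt
  have hs : sp r n ((f i : ℕ)) hlt ∈ t := by
    rw [fib_eq htp hi, mem_fib]
    exact Fin.ext (hf _ hlt)
  have := hord _ hs
  simp [sp] at this
  omega

/-- pick an element of a nonempty finset -/
noncomputable def pk {α : Type*} (t : Finset α) (h : t.Nonempty) : α := h.choose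

lemma pk_mem {α : Type*} (t : Finset α) (h : t.Nonempty) : pk t h ∈ t := h.choose_spec

include hf in
lemma ord_pk_ge {t : Finset (Fin (n + r))} (ht : t ∈ OrdB r n (parts f)) :
    r ≤ (f (pk t (parts_nonempty (Finset.mem_filter.mp ht).1)) : ℕ) :=
  ord_val_ge hf ht (pk_mem _ _)

/-- the forward embedding: an ordinary fiber maps to its common value, minus `r` -/
noncomputable def fwdEmb (hf : ∀ i : Fin (n + r), (i : ℕ) < r → ((f i : ℕ) = (i : ℕ))) :
    {t // t ∈ OrdB r n (parts f)} ↪ Fin x where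
  toFun := fun t => ⟨(f (pk t.1 (parts_nonempty (Finset.mem_filter.mp t.2).1)) : ℕ) - r, by
    have h1 := ord_pk_ge hf t.2
    have h2 := (f (pk t.1 (parts_nonempty (Finset.mem_filter.mp t.2).1))).isLt
    omega⟩
  inj' := by
    rintro ⟨t₁, h₁⟩ ⟨t₂, h₂⟩ heq
    simp only [Fin.mk.injEq] at heq
    have g1 := ord_pk_ge hf h₁
    have g2 := ord_pk_ge hf h₂
    have hv : f (pk t₁ (parts_nonempty (Finset.mem_filter.mp h₁).1)) =
        f (pk t₂ (parts_nonempty (Finset.mem_filter.mp h₂).1)) := Fin.ext (by omega)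
    have e1 := fib_eq (Finset.mem_filter.mp h₁).1
      (pk_mem t₁ (parts_nonempty (Finset.mem_filter.mp h₁).1))
    have e2 := fib_eq (Finset.mem_filter.mp h₂).1
      (pk_mem t₂ (parts_nonempty (Finset.mem_filter.mp h₂).1))
    apply Subtype.ext
    show t₁ = t₂
    rw [hv] at e1
    exact e1.trans e2.symm

end fibers

section bwd
variable {𝒜 : Finset (Finset (Fin (n + r)))}

noncomputable def lab (h : Valid r n 𝒜) (e : {t // t ∈ OrdB r n 𝒜} ↪ Fin x)
    (t : Finset (Fin (n + r))) (ht : t ∈ 𝒜) : Fin (x + r) :=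
  if hs : ∃ j ∈ t, (j : ℕ) < r then
    ⟨(hs.choose : ℕ), by have := hs.choose_spec.2; omega⟩
  else
    (e ⟨t, by
      rw [OrdB, Finset.mem_filter]
      push_neg at hs
      exact ⟨ht, hs⟩⟩).addNat r

lemma lab_congr (h : Valid r n 𝒜) (e : {t // t ∈ OrdB r n 𝒜} ↪ Fin x)
    {t₁ t₂ : Finset (Fin (n + r))} (htt : t₁ = t₂) (ht₁ : t₁ ∈ 𝒜) (ht₂ : t₂ ∈ 𝒜) :
    lab h e t₁ ht₁ = lab h e t₂ ht₂ := by subst htt; rfl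

lemma lab_special (h : Valid r n 𝒜) (e : {t // t ∈ OrdB r n 𝒜} ↪ Fin x)
    {t : Finset (Fin (n + r))} (ht : t ∈ 𝒜) {j : Fin (n + r)} (hj : j ∈ t)
    (hjr : (j : ℕ) < r) : (lab h e t ht : ℕ) = (j : ℕ) := by
  have hs : ∃ j ∈ t, (j : ℕ) < r := ⟨j, hj, hjr⟩
  rw [lab, dif_pos hs]
  show (hs.choose : ℕ) = (j : ℕ)
  by_contra hne
  exact h.2 hs.choose hs.choose_spec.2 j hjr
    (fun hh => hne (congrArg Fin.val hh)) t ht ⟨hs.choose_spec.1, hj⟩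

lemma lab_ord (h : Valid r n 𝒜) (e : {t // t ∈ OrdB r n 𝒜} ↪ Fin x)
    {t : Finset (Fin (n + r))} (ht : t ∈ 𝒜) (ht' : t ∈ OrdB r n 𝒜) :
    lab h e t ht = (e ⟨t, ht'⟩).addNat r := by
  have hs : ¬ ∃ j ∈ t, (j : ℕ) < r := by
    rcases Finset.mem_filter.mp ht' with ⟨-, hord⟩
    push_neg
    exact hord
  rw [lab, dif_neg hs]

lemma lab_inj (h : Valid r n 𝒜) (e : {t // t ∈ OrdB r n 𝒜} ↪ Fin x)
    {t₁ t₂ : Finset (Fin (n + r))} (ht₁ : t₁ ∈ 𝒜) (ht₂ : t₂ ∈ 𝒜)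
    (heq : lab h e t₁ ht₁ = lab h e t₂ ht₂) : t₁ = t₂ := by
  by_cases hs₁ : ∃ j ∈ t₁, (j : ℕ) < r <;> by_cases hs₂ : ∃ j ∈ t₂, (j : ℕ) < r <;>
    rw [lab, lab] at heq
  · rw [dif_pos hs₁, dif_pos hs₂] at heq
    simp only [Fin.mk.injEq] at heq
    have h1 := hs₁.choose_spec
    have h2 := hs₂.choose_spec
    have : hs₁.choose = hs₂.choose := Fin.ext heq
    rw [blk_eq_of h.1 ht₁ h1.1, blk_eq_of h.1 ht₂ h2.1, this]
  · rw [dif_pos hs₁, dif_neg hs₂] at heq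
    have := congrArg Fin.val heq
    simp only [Fin.coe_addNat] at this
    have h1 := hs₁.choose_spec.2
    omega
  · rw [dif_neg hs₁, dif_pos hs₂] at heq
    have := congrArg Fin.val heq
    simp only [Fin.coe_addNat] at this
    have h2 := hs₂.choose_spec.2
    omega
  · rw [dif_neg hs₁, dif_neg hs₂] at heq
    have := congrArg Fin.val heq
    simp only [Fin.coe_addNat] at this
    have : (e ⟨t₁, _⟩) = (e ⟨t₂, _⟩) := Fin.ext (by omega)
    have := e.injective this
    exact congrArg Subtype.val this

end bwd

/-- families counted by `(x+r)^n` -/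
abbrev Ffam (r n x : ℕ) : Type :=
  {f : Fin (n + r) → Fin (x + r) // ∀ i : Fin (n + r), (i : ℕ) < r → ((f i : ℕ) = (i : ℕ))}

/-- families counted by `∑ₖ rStirling r n k * x.descFactorial k` -/
abbrev Tfam (r n x : ℕ) : Type :=
  Σ 𝒜 : {𝒜 : Finset (Finset (Fin (n + r))) // Valid r n 𝒜},
    ({t // t ∈ OrdB r n 𝒜.1} ↪ Fin x)

noncomputable def Phi (F : Ffam r n x) : Tfam r n x :=
  ⟨⟨parts F.1, parts_valid F.2⟩, fwdEmb F.2⟩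

noncomputable def Psi (P : Tfam r n x) : Ffam r n x :=
  ⟨fun i => lab P.1.2 P.2 (blk P.1.2.1 i) (blk_mem P.1.2.1 i), by
    intro i hir
    exact lab_special P.1.2 P.2 (blk_mem P.1.2.1 i) (mem_blk P.1.2.1 i) hir⟩

lemma emb_heq {A B : Finset (Finset (Fin (n + r)))} (hAB : A = B)
    (e1 : {t // t ∈ OrdB r n A} ↪ Fin x) (e2 : {t // t ∈ OrdB r n B} ↪ Fin x)
    (hval : ∀ t (h1 : t ∈ OrdB r n A) (h2 : t ∈ OrdB r n B), e1 ⟨t, h1⟩ = e2 ⟨t, h2⟩) :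
    HEq e1 e2 := by
  subst hAB
  apply heq_of_eq
  ext ⟨t, ht⟩
  exact congrArg Fin.val (hval t ht ht)

lemma left_inv : ∀ F : Ffam r n x, Psi (Phi F) = F := by
  rintro ⟨f, hf⟩
  apply Subtype.ext
  funext i
  show lab (parts_valid hf) (fwdEmb hf) (blk (parts_valid hf).1 i)
    (blk_mem (parts_valid hf).1 i) = f i
  have hmem : fib f (f i) ∈ parts f := mem_parts.mpr ⟨i, rfl⟩
  have hbt : blk (parts_valid hf).1 i = fib f (f i) :=
    (blk_eq_of (parts_valid hf).1 (t := fib f (f i)) hmem (mem_fib.mpr rfl)).symm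
  rw [lab_congr (parts_valid hf) (fwdEmb hf) hbt _ hmem]
  by_cases hs : ∃ j ∈ fib f (f i), (j : ℕ) < r
  · obtain ⟨j, hj, hjr⟩ := hs
    have h1 : (lab (parts_valid hf) (fwdEmb hf) (fib f (f i)) hmem : ℕ) = (j : ℕ) :=
      lab_special _ _ _ hj hjr
    have h2 : f j = f i := mem_fib.mp hj
    apply Fin.ext
    rw [h1, ← hf j hjr, h2]
  · have hord : fib f (f i) ∈ OrdB r n (parts f) := by
      rw [OrdB, Finset.mem_filter]
      push_neg at hs
      exact ⟨hmem, hs⟩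
    rw [lab_ord _ _ _ hord]
    apply Fin.ext
    rw [Fin.coe_addNat]
    have hpk : pk (fib f (f i)) (parts_nonempty hmem) ∈ fib f (f i) := pk_mem _ _
    have hfpk : f (pk (fib f (f i)) (parts_nonempty hmem)) = f i := mem_fib.mp hpk
    have hge : r ≤ (f i : ℕ) := by rw [← hfpk]; exact ord_val_ge hf hord hpk
    show (f (pk (fib f (f i)) (parts_nonempty hmem)) : ℕ) - r + r = (f i : ℕ)
    rw [hfpk]
    omega

lemma right_inv : ∀ P : Tfam r n x, Phi (Psi P) = P := by
  rintro ⟨⟨𝒜, h⟩, e⟩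
  have hfi : ∀ i, (Psi (⟨⟨𝒜, h⟩, e⟩ : Tfam r n x)).1 i = lab h e (blk h.1 i) (blk_mem h.1 i) :=
    fun i => rfl
  set f : Fin (n + r) → Fin (x + r) := (Psi (⟨⟨𝒜, h⟩, e⟩ : Tfam r n x)).1 with hfdef
  have hfib : ∀ t (ht : t ∈ 𝒜), fib f (lab h e t ht) = t := by
    intro t ht
    ext i
    rw [mem_fib]
    constructor
    · intro hfi'
      have : blk h.1 i = t := lab_inj h e (blk_mem h.1 i) ht ((hfi i) ▸ hfi')
      exact this ▸ mem_blk h.1 i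
    · intro hit
      have hbt : blk h.1 i = t := (blk_eq_of h.1 ht hit).symm
      rw [hfi i]
      exact lab_congr h e hbt (blk_mem h.1 i) ht
  have hparts : parts f = 𝒜 := by
    ext t
    rw [mem_parts]
    constructor
    · rintro ⟨i, rfl⟩
      rw [hfi i, hfib]
      exact blk_mem h.1 i
    · intro ht
      obtain ⟨i, hit⟩ := h.1.1 t ht
      refine ⟨i, ?_⟩
      have hbt : blk h.1 i = t := (blk_eq_of h.1 ht hit).symm
      rw [hfi i, lab_congr h e hbt (blk_mem h.1 i) ht, hfib t ht]
  apply Sigma.ext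
  · exact Subtype.ext hparts
  · apply emb_heq hparts
    intro t h1 h2
    apply Fin.ext
    have hne : t.Nonempty := parts_nonempty (Finset.mem_filter.mp h1).1
    have hpk : pk t hne ∈ t := pk_mem _ _
    have ht𝒜 : t ∈ 𝒜 := hparts ▸ (Finset.mem_filter.mp h1).1
    have hbt : blk h.1 (pk t hne) = t := (blk_eq_of h.1 ht𝒜 hpk).symm
    have hfv : f (pk t hne) = (e ⟨t, h2⟩).addNat r := by
      rw [hfi, lab_congr h e hbt (blk_mem _ _) ht𝒜, lab_ord h e ht𝒜 h2]
    show (f (pk t hne) : ℕ) - r = (e ⟨t, h2⟩ : ℕ)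
    rw [hfv, Fin.coe_addNat]
    omega

noncomputable def FT (r n x : ℕ) : Ffam r n x ≃ Tfam r n x :=
  ⟨Phi, Psi, left_inv, right_inv⟩

lemma card_Ffam (r n x : ℕ) : Nat.card (Ffam r n x) = (x + r) ^ n := by
  have E : Ffam r n x ≃ (Fin n → Fin (x + r)) := {
    toFun := fun F j => F.1 ⟨r + j, by omega⟩
    invFun := fun g => ⟨fun i => if hir : (i : ℕ) < r then ⟨(i : ℕ), by omega⟩
      else g ⟨(i : ℕ) - r, by omega⟩, by
        intro i hir
        simp only [dif_pos hir]⟩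
    left_inv := by
      rintro ⟨f, hf⟩
      apply Subtype.ext
      funext i
      by_cases hir : (i : ℕ) < r
      · simp only [dif_pos hir]
        exact (Fin.ext (hf i hir)).symm
      · simp only [dif_neg hir]
        congr 1
        apply Fin.ext
        show r + ((i : ℕ) - r) = (i : ℕ)
        omega
    right_inv := by
      intro g
      funext j
      have hc : ¬ (((⟨r + (j : ℕ), by omega⟩ : Fin (n + r)) : ℕ) < r) := by simp
      simp only [dif_neg hc]
      congr 1
      apply Fin.ext
      show r + (j : ℕ) - r = (j : ℕ)
      omega }
  rw [Nat.card_congr E, Nat.card_eq_fintype_card, Fintype.card_fun]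
  simp

lemma card_Tfam (r n x : ℕ) :
    Nat.card (Tfam r n x) = ∑ k ∈ Finset.range (n + 1), rStirling r n k * x.descFactorial k := by
  classical
  rw [Nat.card_eq_fintype_card, Fintype.card_sigma]
  have step1 : ∀ 𝒜 : {𝒜 : Finset (Finset (Fin (n + r))) // Valid r n 𝒜},
      Fintype.card ({t // t ∈ OrdB r n 𝒜.1} ↪ Fin x)
        = x.descFactorial ((OrdB r n 𝒜.1).card) := by
    intro 𝒜
    rw [Fintype.card_embedding_eq, Fintype.card_fin]
    congr 1
    exact Fintype.card_coe _
  rw [Finset.sum_congr rfl (fun 𝒜 _ => step1 𝒜)]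
  rw [← Finset.sum_fiberwise_of_maps_to'
    (t := Finset.range (n + 1))
    (g := fun 𝒜 : {𝒜 : Finset (Finset (Fin (n + r))) // Valid r n 𝒜} => (OrdB r n 𝒜.1).card)
    (fun 𝒜 _ => Finset.mem_range.mpr (Nat.lt_succ_of_le (ordb_card_le 𝒜.2)))
    (fun k => x.descFactorial k)]
  apply Finset.sum_congr rfl
  intro k _
  rw [Finset.sum_const, smul_eq_mul]
  congr 1
  have h1 : (Finset.univ.filter
      (fun 𝒜 : {𝒜 : Finset (Finset (Fin (n + r))) // Valid r n 𝒜} =>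
        (OrdB r n 𝒜.1).card = k)).card
      = Fintype.card {𝒜 : {𝒜 : Finset (Finset (Fin (n + r))) // Valid r n 𝒜} //
          (OrdB r n 𝒜.1).card = k} := (Fintype.card_subtype _).symm
  rw [h1, rStirling, Nat.card_eq_fintype_card]
  apply Fintype.card_congr
  refine (Equiv.subtypeSubtypeEquivSubtypeInter (Valid r n)
    (fun 𝒜 => (OrdB r n 𝒜).card = k)).trans (Equiv.subtypeEquivRight ?_)
  intro 𝒜
  constructor
  · rintro ⟨hv, hc⟩
    exact ⟨hv.1, by rw [card_valid hv, hc], hv.2⟩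
  · rintro ⟨h1, h2, h3⟩
    have hv : Valid r n 𝒜 := ⟨h1, h3⟩
    have := card_valid hv
    exact ⟨hv, by omega⟩

theorem key (r n x : ℕ) :
    (x + r) ^ n = ∑ k ∈ Finset.range (n + 1), rStirling r n k * x.descFactorial k := by
  rw [← card_Ffam r n x, ← card_Tfam r n x]
  exact Nat.card_congr (FT r n x)

section analysis
open scoped Nat

lemma exp_tsum (y : ℝ) : ∑' j : ℕ, y ^ j / j ! = Real.exp y := by
  rw [Real.exp_eq_exp_ℝ, NormedSpace.exp_eq_tsum_div]

lemma pow_le_bound (r N j : ℕ) :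
    ((j + r : ℕ) : ℝ) ^ N ≤ ((2 : ℝ) ^ r) ^ N * ((2 : ℝ) ^ N) ^ j := by
  have h1 : ((j + r : ℕ) : ℝ) ≤ (2 : ℝ) ^ (j + r) := by
    have h := (Nat.lt_two_pow_self (n := j + r)).le
    calc ((j + r : ℕ) : ℝ) ≤ ((2 ^ (j + r) : ℕ) : ℝ) := by exact_mod_cast h
    _ = (2 : ℝ) ^ (j + r) := by push_cast; ring
  calc ((j + r : ℕ) : ℝ) ^ N ≤ ((2 : ℝ) ^ (j + r)) ^ N :=
        pow_le_pow_left₀ (by positivity) h1 N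
  _ = ((2 : ℝ) ^ r) ^ N * ((2 : ℝ) ^ N) ^ j := by
      rw [pow_add, mul_pow, ← pow_mul, mul_comm j N, pow_mul]
      ring

lemma L0 (r N : ℕ) (w : ℝ) :
    Summable (fun j : ℕ => ((j + r : ℕ) : ℝ) ^ N * w ^ j / j !) := by
  apply Summable.of_norm_bounded
    (g := fun j => ((2 : ℝ) ^ r) ^ N * (((2 : ℝ) ^ N * |w|) ^ j / j !))
    ((Real.summable_pow_div_factorial ((2 : ℝ) ^ N * |w|)).mul_left _)
  intro j
  have hnorm : ‖((j + r : ℕ) : ℝ) ^ N * w ^ j / (j ! : ℝ)‖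
      = ((j + r : ℕ) : ℝ) ^ N * |w| ^ j / j ! := by
    rw [Real.norm_eq_abs, abs_div, abs_mul, abs_pow, abs_pow, Nat.abs_cast, Nat.abs_cast]
  rw [hnorm, mul_pow, ← mul_div_assoc, ← mul_assoc]
  gcongr
  exact pow_le_bound r N j

lemma L2 (k : ℕ) (z : ℝ) :
    Summable (fun j : ℕ => (j.descFactorial k : ℝ) * z ^ j / j !) ∧
    ∑' j : ℕ, (j.descFactorial k : ℝ) * z ^ j / j ! = z ^ k * Real.exp z := by
  have hshift : ∀ i : ℕ,
      ((i + k).descFactorial k : ℝ) * z ^ (i + k) / (i + k)! = z ^ k * (z ^ i / i !) := by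
    intro i
    have h1 : ((i)! : ℝ) * ((i + k).descFactorial k : ℝ) = ((i + k)! : ℝ) := by
      have h := Nat.factorial_mul_descFactorial (n := i + k) (k := k) (Nat.le_add_left k i)
      rw [Nat.add_sub_cancel] at h
      exact_mod_cast h
    have h2 : ((i + k)! : ℝ) ≠ 0 := by positivity
    have h3 : ((i)! : ℝ) ≠ 0 := by positivity
    field_simp
    rw [pow_add]
    linear_combination (z ^ i * z ^ k) * h1
  have hs : Summable (fun j : ℕ => (j.descFactorial k : ℝ) * z ^ j / j !) := by
    rw [← summable_nat_add_iff k]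
    apply Summable.congr ((Real.summable_pow_div_factorial z).mul_left (z ^ k))
    intro i
    exact (hshift i).symm
  refine ⟨hs, ?_⟩
  rw [← Summable.sum_add_tsum_nat_add k hs]
  have hzero : ∀ i ∈ Finset.range k, (i.descFactorial k : ℝ) * z ^ i / i ! = 0 := by
    intro i hi
    rw [Nat.descFactorial_eq_zero_iff_lt.mpr (Finset.mem_range.mp hi)]
    simp
  rw [Finset.sum_eq_zero hzero, zero_add, tsum_congr hshift, tsum_mul_left, exp_tsum]

lemma keyR (r N j : ℕ) : ((j + r : ℕ) : ℝ) ^ N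
    = ∑ k ∈ Finset.range (N + 1), (rStirling r N k : ℝ) * (j.descFactorial k : ℝ) := by
  exact_mod_cast key r N j

lemma dobinski (r N : ℕ) (z : ℝ) :
    ∑' j : ℕ, ((j + r : ℕ) : ℝ) ^ N * z ^ j / j ! = Real.exp z * rBell r N z := by
  have h1 : ∀ j : ℕ, ((j + r : ℕ) : ℝ) ^ N * z ^ j / j ! =
      ∑ k ∈ Finset.range (N + 1),
        (rStirling r N k : ℝ) * ((j.descFactorial k : ℝ) * z ^ j / j !) := by
    intro j
    rw [keyR, Finset.sum_mul, Finset.sum_div]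
    apply Finset.sum_congr rfl
    intros
    ring
  rw [tsum_congr h1, Summable.tsum_finsetSum (fun k _ => ((L2 k z).1.mul_left _))]
  have h2 : ∀ k ∈ Finset.range (N + 1),
      ∑' j : ℕ, (rStirling r N k : ℝ) * ((j.descFactorial k : ℝ) * z ^ j / j !)
        = (rStirling r N k : ℝ) * (z ^ k * Real.exp z) := by
    intro k _
    rw [tsum_mul_left, (L2 k z).2]
  rw [Finset.sum_congr rfl h2, rBell, Finset.mul_sum]
  apply Finset.sum_congr rfl
  intros
  ring

end analysis

end RB

open scoped Nat

/-- $\sum_{n\ge0} B_{n+m}(z;r) t^n/n! = B_m(z e^t;r) e^{z(e^t-1)+rt}$. -/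
theorem rBell_shifted_egf (m r : ℕ) (z t : ℝ) :
    Summable (fun n : ℕ => rBell r (n + m) z * t ^ n / (Nat.factorial n)) ∧
    (∑' n : ℕ, rBell r (n + m) z * t ^ n / (Nat.factorial n)) =
      rBell r m (z * Real.exp t) * Real.exp (z * (Real.exp t - 1) + r * t) := by
  classical
  set G : ℕ × ℕ → ℝ :=
    fun p => ((p.1 + r : ℕ) : ℝ) ^ (p.2 + m) * z ^ p.1 * t ^ p.2 / (p.1 ! * p.2 !) with hG
  -- pointwise absolute value
  have habs_eq : ∀ j n : ℕ, |G (j, n)| =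
      (((j + r : ℕ) : ℝ) ^ m * |z| ^ j / j !) * ((((j + r : ℕ) : ℝ) * |t|) ^ n / n !) := by
    intro j n
    simp only [hG]
    rw [abs_div, abs_mul, abs_mul, abs_pow, abs_pow, abs_pow, Nat.abs_cast, abs_mul,
      Nat.abs_cast, Nat.abs_cast, mul_pow, pow_add]
    field_simp
  have habs : Summable (fun p : ℕ × ℕ => |G p|) := by
    rw [summable_prod_of_nonneg (fun p => abs_nonneg _)]
    constructor
    · intro j
      apply Summable.congr
        (((Real.summable_pow_div_factorial (((j + r : ℕ) : ℝ) * |t|)).mul_left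
          (((j + r : ℕ) : ℝ) ^ m * |z| ^ j / j !)))
      intro n
      exact (habs_eq j n).symm
    · have hrow : ∀ j : ℕ, ∑' n : ℕ, |G (j, n)| =
          Real.exp ((r : ℝ) * |t|) *
            (((j + r : ℕ) : ℝ) ^ m * (|z| * Real.exp |t|) ^ j / j !) := by
        intro j
        rw [tsum_congr (habs_eq j), tsum_mul_left, RB.exp_tsum]
        rw [mul_pow]
        have : Real.exp (((j + r : ℕ) : ℝ) * |t|)
            = Real.exp |t| ^ j * Real.exp ((r : ℝ) * |t|) := by
          push_cast
          rw [add_mul, Real.exp_add, Real.exp_nat_mul]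
        rw [this]
        ring
      apply Summable.congr ((RB.L0 r m (|z| * Real.exp |t|)).mul_left
        (Real.exp ((r : ℝ) * |t|)))
      intro j
      exact (hrow j).symm
  have hG_sum : Summable G := summable_abs_iff.mp habs
  have hsec : ∀ j : ℕ, Summable (fun n => G (j, n)) := fun j => hG_sum.prod_factor j
  have hrow : ∀ j : ℕ, ∑' n : ℕ, G (j, n) =
      (((j + r : ℕ) : ℝ) ^ m * z ^ j / j !) * Real.exp (((j + r : ℕ) : ℝ) * t) := by
    intro j
    have hpt : ∀ n : ℕ, G (j, n) =
        (((j + r : ℕ) : ℝ) ^ m * z ^ j / j !) * ((((j + r : ℕ) : ℝ) * t) ^ n / n !) := by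
      intro n
      simp only [hG]
      rw [mul_pow, pow_add]
      field_simp
    rw [tsum_congr hpt, tsum_mul_left, RB.exp_tsum]
  have hcol : ∀ n : ℕ, ∑' j : ℕ, G (j, n) =
      (t ^ n / n !) * (Real.exp z * rBell r (n + m) z) := by
    intro n
    have hpt : ∀ j : ℕ, G (j, n) =
        (t ^ n / n !) * (((j + r : ℕ) : ℝ) ^ (n + m) * z ^ j / j !) := by
      intro j
      simp only [hG]
      field_simp
    rw [tsum_congr hpt, tsum_mul_left, RB.dobinski]
  have hswap : Summable (fun p : ℕ × ℕ => G p.swap) := hG_sum.prod_symm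
  have hmarg : Summable (fun n : ℕ => ∑' j : ℕ, G (j, n)) := by
    exact (hswap.hasSum.prod_fiberwise (fun n => (hswap.prod_factor n).hasSum)).summable
  have hsummable : Summable (fun n : ℕ => rBell r (n + m) z * t ^ n / n !) := by
    have h2 : Summable (fun n : ℕ => Real.exp z * (rBell r (n + m) z * t ^ n / n !)) := by
      apply Summable.congr hmarg
      intro n
      rw [hcol n]
      ring
    apply Summable.congr (h2.mul_left (Real.exp z)⁻¹)
    intro n
    rw [← mul_assoc, inv_mul_cancel₀ (Real.exp_ne_zero z), one_mul]
  refine ⟨hsummable, ?_⟩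
  have E1 : ∑' (j : ℕ) (n : ℕ), G (j, n) =
      Real.exp ((r : ℝ) * t) * (Real.exp (z * Real.exp t) * rBell r m (z * Real.exp t)) := by
    have hpt : ∀ j : ℕ, ∑' n : ℕ, G (j, n) =
        Real.exp ((r : ℝ) * t) * (((j + r : ℕ) : ℝ) ^ m * (z * Real.exp t) ^ j / j !) := by
      intro j
      rw [hrow j, mul_pow]
      have : Real.exp (((j + r : ℕ) : ℝ) * t)
          = Real.exp t ^ j * Real.exp ((r : ℝ) * t) := by
        push_cast
        rw [add_mul, Real.exp_add, Real.exp_nat_mul]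
      rw [this]
      ring
    rw [tsum_congr hpt, tsum_mul_left, RB.dobinski]
  have E2 : ∑' (n : ℕ) (j : ℕ), G (j, n) = ∑' (j : ℕ) (n : ℕ), G (j, n) := by
    apply Summable.tsum_comm (f := fun j n => G (j, n))
    apply Summable.congr hG_sum
    intro p
    rfl
  calc ∑' n : ℕ, rBell r (n + m) z * t ^ n / n !
      = ∑' n : ℕ, (Real.exp z)⁻¹ * ((t ^ n / n !) * (Real.exp z * rBell r (n + m) z)) := by
        apply tsum_congr
        intro n
        rw [← mul_assoc]
        field_simp
    _ = (Real.exp z)⁻¹ * ∑' (n : ℕ) (j : ℕ), G (j, n) := by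
        rw [tsum_mul_left]
        congr 1
        exact tsum_congr (fun n => (hcol n).symm)
    _ = (Real.exp z)⁻¹ * (Real.exp ((r : ℝ) * t) *
          (Real.exp (z * Real.exp t) * rBell r m (z * Real.exp t))) := by
        rw [E2, E1]
    _ = rBell r m (z * Real.exp t) * Real.exp (z * (Real.exp t - 1) + r * t) := by
        rw [show z * (Real.exp t - 1) + (r : ℝ) * t
            = (z * Real.exp t + (r : ℝ) * t) - z by ring, Real.exp_sub, Real.exp_add]
        field_simp
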